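/- Under the stated hypotheses, the cyclic code C of length n over F with defining set of exponents Z = L ∪ D is an LCD code, i.e., C ∩ C^⊥ = {0}. -/

import Mathlib

/-- The cyclic code of length `n` with defining set of exponents `Z`:
codewords have entries in the field `K`, and parity checks are computed in
the field `F` via the ring homomorphism `φ`, using powers of `α`. -/
def cyclicCode {K F : Type*} [Field K] [Field F] (φ : K →+* F) (n : ℕ) (α : F)
    (Z : Set ℕ) : Submodule K (Fin n → K) where
  carrier := {c | ∀ z ∈ Z, ∑ i : Fin n, φ (c i) * α ^ ((i : ℕ) * z) = 0}
  add_mem' := by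
    intro a b ha hb z hz
    have h : (∑ i : Fin n, φ ((a + b) i) * α ^ ((i : ℕ) * z))
        = (∑ i : Fin n, φ (a i) * α ^ ((i : ℕ) * z))
          + ∑ i : Fin n, φ (b i) * α ^ ((i : ℕ) * z) := by
      rw [← Finset.sum_add_distrib]
      refine Finset.sum_congr rfl fun i _ => ?_
      simp [add_mul]
    rw [h, ha z hz, hb z hz, add_zero]
  zero_mem' := by intro z hz; simp
  smul_mem' := by
    intro c a ha z hz
    have h : (∑ i : Fin n, φ ((c • a) i) * α ^ ((i : ℕ) * z))
        = φ c * ∑ i : Fin n, φ (a i) * α ^ ((i : ℕ) * z) := by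
      rw [Finset.mul_sum]
      refine Finset.sum_congr rfl fun i _ => ?_
      simp [mul_assoc]
    rw [h, ha z hz, mul_zero]

/-- The dual of a code: all vectors orthogonal to every codeword. -/
def dualCode {K : Type*} [Field K] {n : ℕ} (C : Set (Fin n → K)) : Set (Fin n → K) :=
  {x | ∀ c ∈ C, ∑ i : Fin n, x i * c i = 0}

/-- A linear code is LCD if its intersection with its dual is `{0}`. -/
def IsLCD {K : Type*} [Field K] {n : ℕ} (C : Submodule K (Fin n → K)) : Prop :=
  (C : Set (Fin n → K)) ∩ dualCode (C : Set (Fin n → K)) = {0}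

/-- A code has locality `r` if every coordinate position `i` is recoverable as a fixed
linear combination of at most `r` other coordinate positions, uniformly over all codewords. -/
def HasLocality {K : Type*} [Field K] {n : ℕ} (C : Set (Fin n → K)) (r : ℕ) : Prop :=
  ∀ i : Fin n, ∃ (R : Finset (Fin n)) (lam : Fin n → K),
    i ∉ R ∧ R.card ≤ r ∧ ∀ c ∈ C, c i = ∑ j ∈ R, lam j * c j

/-- The `q`-cyclotomic coset of `a` modulo `n`:
`[a] = {a·q^j mod n : j = 0, 1, 2, …}` (natural number version). -/
def cycCoset (q n a : ℕ) : Set ℕ := {b | ∃ j : ℕ, b = a * q ^ j % n}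


lemma mySumPow {F : Type*} [Field F] {n : ℕ} (hn : 0 < n) {α : F} (hα : orderOf α = n)
    (m : ℕ) : ∑ i : Fin n, α ^ ((i : ℕ) * m) = if n ∣ m then (n : F) else 0 := by
  have h1 : ∑ i : Fin n, α ^ ((i : ℕ) * m) = ∑ i ∈ Finset.range n, (α ^ m) ^ i := by
    rw [← Fin.sum_univ_eq_sum_range (fun i => (α ^ m) ^ i)]
    exact Finset.sum_congr rfl fun i _ => by rw [← pow_mul, mul_comm]
  rw [h1]
  by_cases h : n ∣ m
  · have hm1 : α ^ m = 1 := orderOf_dvd_iff_pow_eq_one.mp (hα ▸ h)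
    simp [hm1, h]
  · have hne : α ^ m ≠ 1 := fun he => h (hα ▸ orderOf_dvd_of_pow_eq_one he)
    rw [geom_sum_eq hne, if_neg h]
    have hmn : (α ^ m) ^ n = 1 := by
      rw [← pow_mul, mul_comm, pow_mul, ← hα, pow_orderOf_eq_one, one_pow]
    rw [hmn, sub_self, zero_div]

lemma myCastNeZero {F : Type*} [Field F] [Fintype F] {n : ℕ} (hn : 0 < n) {α : F}
    (hα : orderOf α = n) : (n : F) ≠ 0 := by
  intro h
  set p := ringChar F with hp
  have hcp : CharP F p := ringChar.charP F
  have hprime : p.Prime := CharP.char_is_prime F p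
  have : Fact p.Prime := ⟨hprime⟩
  have hdvd : p ∣ n := (CharP.cast_eq_zero_iff F p n).mp h
  obtain ⟨m, hm⟩ := hdvd
  have hm0 : 0 < m := by
    rcases Nat.eq_zero_or_pos m with h0 | h0
    · subst h0; simp at hm; omega
    · exact h0
  have hβ : (α ^ m) ^ p = 1 := by
    rw [← pow_mul, mul_comm, ← hm, ← hα, pow_orderOf_eq_one]
  have hsub : (α ^ m - 1) ^ p = 0 := by
    rw [sub_pow_char, hβ, one_pow, sub_self]
  have h1 : α ^ m = 1 := by
    have := pow_eq_zero_iff hprime.ne_zero |>.mp hsub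
    exact sub_eq_zero.mp this
  have hnd : n ∣ m := hα ▸ orderOf_dvd_of_pow_eq_one h1
  have hle : n ≤ m := Nat.le_of_dvd hm0 hnd
  have hlt : m < n := by
    calc m = 1 * m := (one_mul m).symm
    _ < p * m := (Nat.mul_lt_mul_right hm0).mpr hprime.one_lt
    _ = n := hm.symm
  omega

lemma myDvdIff {n i j : ℕ} (hi : i < n) (hj : j < n) : n ∣ i + (n - j) ↔ i = j := by
  constructor
  · rintro ⟨m, hm⟩
    rcases Nat.lt_or_ge m 2 with h2 | h2
    · interval_cases m <;> omega
    · have : 2 * n ≤ n * m := by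
        calc 2 * n = n * 2 := by ring
        _ ≤ n * m := Nat.mul_le_mul_left n h2
      omega
  · rintro rfl
    exact ⟨1, by omega⟩

/-- Theorem 3.3: under the stated hypotheses, the cyclic code of length `n` over `F`
with defining set of exponents `Z = L ∪ D` is an LCD code. -/
theorem stmt11
    (F : Type*) [Field F] [Fintype F] (n k r : ℕ)
    (hn : 0 < n) (hk : 0 < k) (hr : 0 < r) (hrk : r ≤ k)
    (α : F) (hα : orderOf α = n)
    (hr1n : r + 1 ∣ n) (hrdk : r ∣ k) (hkn : k * (r + 1) ≤ n * r)
    (heven : Even (n / (r + 1) - k / r))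
    (t : ℕ) (ht : t = (n - k * (r + 1) / r) / 2)
    (L D : Set ℕ)
    (hL : L = {i | i < n ∧ (r + 1) ∣ i})
    (hD : D = {d : ℕ | ∃ s : ℤ, -(t : ℤ) ≤ s ∧ s ≤ (t : ℤ) ∧ (d : ℤ) = s % (n : ℤ)})
    : IsLCD (cyclicCode (RingHom.id F) n α (L ∪ D)) := by
  have hnF : (n : F) ≠ 0 := myCastNeZero hn hα
  set Z : Set ℕ := L ∪ D with hZ
  have hZlt : ∀ z ∈ Z, z < n := by
    intro z hz
    rcases hz with hzL | hzD
    · rw [hL] at hzL; exact hzL.1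
    · rw [hD] at hzD
      obtain ⟨s, _, _, hs⟩ := hzD
      have h2 : s % (n : ℤ) < n := Int.emod_lt_of_pos s (by exact_mod_cast hn)
      rw [← hs] at h2
      exact_mod_cast h2
  have hZ0 : 0 ∈ Z := Or.inl (by rw [hL]; exact ⟨hn, dvd_zero _⟩)
  have hsym : ∀ z ∈ Z, (n - z) % n ∈ Z := by
    intro z hz
    have hzn : z < n := hZlt z hz
    rcases hz with hzL | hzD
    · rw [hL] at hzL
      rcases Nat.eq_zero_or_pos z with rfl | hz0
      · simpa using hZ0
      · left
        rw [hL]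
        have heq : (n - z) % n = n - z := Nat.mod_eq_of_lt (by omega)
        rw [heq]
        exact ⟨by omega, Nat.dvd_sub hr1n hzL.2⟩
    · rw [hD] at hzD
      obtain ⟨s, hs1, hs2, hs3⟩ := hzD
      right
      rw [hD]
      refine ⟨-s, by omega, by omega, ?_⟩
      have hmod : (((n - z) % n : ℕ) : ℤ) = ((n : ℤ) - z) % n := by
        push_cast [Nat.cast_sub hzn.le]
        rfl
      rw [hmod]
      have h1 : Int.ModEq (n : ℤ) (z : ℤ) s := by
        show (z : ℤ) % n = s % n
        rw [hs3]
        exact Int.emod_emod_of_dvd s dvd_rfl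
      have h0 : Int.ModEq (n : ℤ) (n : ℤ) 0 := by
        show (n : ℤ) % n = 0 % n
        simp [Int.emod_self]
      have h2 : Int.ModEq (n : ℤ) ((n : ℤ) - z) (0 - s) := h0.sub h1
      rw [zero_sub] at h2
      exact h2
  rw [IsLCD]
  apply Set.eq_singleton_iff_unique_mem.mpr
  constructor
  · exact ⟨(cyclicCode (RingHom.id F) n α Z).zero_mem, fun x hx => by simp⟩
  · rintro c ⟨hcC, hcD⟩
    have hcC' : ∀ z ∈ Z, ∑ i : Fin n, (RingHom.id F) (c i) * α ^ ((i : ℕ) * z) = 0 := hcC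
    have hcD' : ∀ x ∈ (cyclicCode (RingHom.id F) n α Z : Set (Fin n → F)),
        ∑ i : Fin n, c i * x i = 0 := hcD
    have hC : ∀ z ∈ Z, ∑ i : Fin n, c i * α ^ ((i : ℕ) * z) = 0 := by
      intro z hz
      have := hcC' z hz
      simpa using this
    have hS : ∀ a : ℕ, a < n → ∑ i : Fin n, c i * α ^ ((i : ℕ) * a) = 0 := by
      intro a ha
      by_cases haZ : a ∈ Z
      · exact hC a haZ
      · have hvmem : (fun i : Fin n => α ^ ((i : ℕ) * a)) ∈
            cyclicCode (RingHom.id F) n α Z := by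
          show ∀ z ∈ Z, ∑ i : Fin n,
            (RingHom.id F) (α ^ ((i : ℕ) * a)) * α ^ ((i : ℕ) * z) = 0
          intro z hz
          have hzn : z < n := hZlt z hz
          have hcomb : ∀ i : Fin n,
              (RingHom.id F) (α ^ ((i : ℕ) * a)) * α ^ ((i : ℕ) * z)
                = α ^ ((i : ℕ) * (a + z)) := by
            intro i
            simp only [RingHom.id_apply, ← pow_add]
            congr 1
            ring
          rw [Finset.sum_congr rfl fun i _ => hcomb i, mySumPow hn hα]
          rw [if_neg]
          rintro ⟨m, hm⟩
          have hmlt : m < 2 := by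
            by_contra h2
            have h2n : 2 * n ≤ n * m := by
              calc 2 * n = n * 2 := by ring
                _ ≤ n * m := Nat.mul_le_mul_left n (by omega)
            omega
          interval_cases m
          · have ha0 : a = 0 := by omega
            exact haZ (ha0 ▸ hZ0)
          · have haz : a = (n - z) % n := by
              rcases Nat.eq_zero_or_pos z with rfl | hz0
              · omega
              · rw [Nat.mod_eq_of_lt (by omega)]; omega
            exact haZ (haz ▸ hsym z hz)
        have := hcD' _ hvmem
        simpa using this
    funext j
    have hT : ∑ a : Fin n, (∑ i : Fin n, c i * α ^ ((i : ℕ) * (a : ℕ)))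
        * α ^ ((a : ℕ) * (n - (j : ℕ))) = 0 := by
      apply Finset.sum_eq_zero
      intro a _
      rw [hS (a : ℕ) a.isLt, zero_mul]
    have hswap : ∑ a : Fin n, (∑ i : Fin n, c i * α ^ ((i : ℕ) * (a : ℕ)))
        * α ^ ((a : ℕ) * (n - (j : ℕ)))
        = ∑ i : Fin n, c i * (if n ∣ (i : ℕ) + (n - (j : ℕ)) then (n : F) else 0) := by
      have step1 : ∀ a : Fin n, (∑ i : Fin n, c i * α ^ ((i : ℕ) * (a : ℕ)))
          * α ^ ((a : ℕ) * (n - (j : ℕ)))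
          = ∑ i : Fin n, c i * α ^ ((a : ℕ) * ((i : ℕ) + (n - (j : ℕ)))) := by
        intro a
        rw [Finset.sum_mul]
        refine Finset.sum_congr rfl fun i _ => ?_
        rw [mul_assoc, ← pow_add]
        congr 2
        ring
      rw [Finset.sum_congr rfl fun a _ => step1 a, Finset.sum_comm]
      refine Finset.sum_congr rfl fun i _ => ?_
      rw [← Finset.mul_sum, ← mySumPow hn hα ((i : ℕ) + (n - (j : ℕ)))]
    have hiff : ∀ i : Fin n, (if n ∣ (i : ℕ) + (n - (j : ℕ)) then (n : F) else 0)
        = if i = j then (n : F) else 0 := by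
      intro i
      exact if_congr ((myDvdIff i.isLt j.isLt).trans (Fin.val_eq_val i j)) rfl rfl
    have hcj : c j * (n : F) = 0 := by
      rw [← hT, hswap, Finset.sum_congr rfl fun i _ => by rw [hiff i]]
      simp
    have := mul_eq_zero.mp hcj
    simp only [Pi.zero_apply]
    tauto
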